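/- The distribution of saillance compositions in a shifted shuffle depends only on the saillance compositions of the operands: if SC(α) = SC(α') and SC(β) = SC(β'), then for every composition I, the number of permutations γ in the shifted shuffle of α and β with SC(γ) = I equals the number of permutations γ' in the shifted shuffle of α' and β' with SC(γ') = I. -/

import Mathlib

open scoped Classical

/-- A word is *initially dominated* if its first letter is strictly greater
than all subsequent letters. -/
def initiallyDominated (w : List ℕ) : Prop :=
  w ≠ [] ∧ ∀ a ∈ w.tail, a < w.head!

/-- Positions (0-indexed) of the left-to-right maxima of a word. -/
def lrMaxPositions (w : List ℕ) : List ℕ :=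
  (List.range w.length).filter (fun i => decide (∀ j < i, w[j]! < w[i]!))

/-- The saillance composition of a word: gaps between consecutive
left-to-right maxima positions. -/
def SC (w : List ℕ) : List ℕ :=
  List.zipWith (fun a b => a - b) ((lrMaxPositions w).tail ++ [w.length]) (lrMaxPositions w)

/-- The word (one-line notation, values in {1,…,n}) of a permutation of {1,…,n}. -/
def permWord {n : ℕ} (σ : Equiv.Perm (Fin n)) : List ℕ :=
  List.ofFn (fun i => (σ i : ℕ) + 1)

/-- `w` occurs in the shifted shuffle of `u` (a word on {1,…,p}) and `v`
(whose letters get shifted by `p`): the subword of letters ≤ p is `u` and the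
subword of letters > p is `v` shifted by `p`. -/
def shiftedShuffleMem (p : ℕ) (u v w : List ℕ) : Prop :=
  w.filter (fun x => decide (x ≤ p)) = u ∧
    w.filter (fun x => decide (p < x)) = v.map (· + p)

lemma get!_eq (l : List ℕ) {i : ℕ} (h : i < l.length) : l[i]! = l[i] := by
  exact getElem!_pos l i h

lemma mem_lrMax {w : List ℕ} {i : ℕ} :
    i ∈ lrMaxPositions w ↔ i < w.length ∧ ∀ j < i, w[j]! < w[i]! := by
  simp [lrMaxPositions, List.mem_filter, List.mem_range]

lemma lr_sorted (w : List ℕ) : (lrMaxPositions w).Pairwise (· < ·) :=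
  List.pairwise_lt_range.filter _

lemma lr_zero_mem (w : List ℕ) (hw : w ≠ []) : 0 ∈ lrMaxPositions w := by
  rw [mem_lrMax]
  exact ⟨List.length_pos_iff.mpr hw, by omega⟩

lemma lr_ne_nil (w : List ℕ) (hw : w ≠ []) : lrMaxPositions w ≠ [] :=
  List.ne_nil_of_mem (lr_zero_mem w hw)

lemma lr_head (w : List ℕ) (hw : w ≠ []) :
    ∀ h : 0 < (lrMaxPositions w).length, (lrMaxPositions w)[0] = 0 := by
  intro h
  have h0 := lr_zero_mem w hw
  rcases List.mem_iff_getElem.mp h0 with ⟨n, hn, he⟩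
  rcases Nat.eq_zero_or_pos n with rfl | hpos
  · exact he
  · exfalso
    have := List.pairwise_iff_get.mp (lr_sorted w) ⟨0, h⟩ ⟨n, hn⟩ hpos
    simp only [List.get_eq_getElem] at this
    omega

lemma sc_len (u : List ℕ) (hu : u ≠ []) : (SC u).length = (lrMaxPositions u).length := by
  have h := lr_ne_nil u hu
  rw [SC, List.length_zipWith, List.length_append, List.length_tail]
  have : 0 < (lrMaxPositions u).length := List.length_pos_iff.mpr h
  simp; omega

lemma lr_strict (u : List ℕ) {a b : ℕ} (hab : a < b) (hb : b < (lrMaxPositions u).length) :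
    (lrMaxPositions u)[a]'(by omega) < (lrMaxPositions u)[b] := by
  have := List.pairwise_iff_get.mp (lr_sorted u) ⟨a, by omega⟩ ⟨b, hb⟩ hab
  simpa using this

lemma lr_succ (u : List ℕ) (k : ℕ) (hk : k + 1 < (lrMaxPositions u).length) :
    (lrMaxPositions u)[k + 1] =
      (lrMaxPositions u)[k]'(by omega) + (SC u)[k]'(by
        rw [sc_len u]
        · omega
        · intro h; rw [lrMaxPositions, h] at hk; simp at hk) := by
  have hne : u ≠ [] := by
    intro h; rw [lrMaxPositions, h] at hk; simp at hk
  have hlt : (lrMaxPositions u)[k]'(by omega) < (lrMaxPositions u)[k + 1] :=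
    lr_strict u (Nat.lt_succ_self k) hk
  have hsc : (SC u)[k]'(by rw [sc_len u hne]; omega) =
      ((lrMaxPositions u).tail ++ [u.length])[k]'(by
        rw [List.length_append, List.length_tail]; simp; omega) -
        (lrMaxPositions u)[k]'(by omega) := by
    simp only [SC]
    exact List.getElem_zipWith
  have htl : ((lrMaxPositions u).tail ++ [u.length])[k]'(by
      rw [List.length_append, List.length_tail]; simp; omega) =
      (lrMaxPositions u)[k + 1] := by
    rw [List.getElem_append_left (by rw [List.length_tail]; omega)]
    exact List.getElem_tail _
  rw [hsc, htl]
  omega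

lemma lr_eq_of_SC_eq {u u' : List ℕ} (hl : u.length = u'.length) (h : SC u = SC u') :
    lrMaxPositions u = lrMaxPositions u' := by
  rcases eq_or_ne u [] with rfl | hne
  · have : u' = [] := List.length_eq_zero_iff.mp (by simpa using hl.symm)
    rw [this]
  · have hne' : u' ≠ [] := by
      intro hh; rw [hh] at hl; simp at hl; exact hne hl
    have hlen : (lrMaxPositions u).length = (lrMaxPositions u').length := by
      rw [← sc_len u hne, ← sc_len u' hne', h]
    apply List.ext_getElem hlen
    intro n h1 h2
    induction n with
    | zero => rw [lr_head u hne, lr_head u' hne']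
    | succ k ih =>
      rw [lr_succ u k h1, lr_succ u' k h2, ih (by omega) (by omega)]
      exact congrArg₂ _ rfl (List.getElem_of_eq h _)

lemma lr_map_add (v : List ℕ) (p : ℕ) : lrMaxPositions (v.map (· + p)) = lrMaxPositions v := by
  unfold lrMaxPositions
  rw [List.length_map]
  apply List.filter_congr
  intro i hi
  rw [List.mem_range] at hi
  simp only [decide_eq_decide]
  have key : ∀ j, j < v.length → (v.map (· + p))[j]! = v[j]! + p := by
    intro j hj
    rw [get!_eq _ (by simpa using hj), get!_eq _ hj, List.getElem_map]
  constructor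
  · intro h j hj
    have := h j hj
    rw [key j (by omega), key i hi] at this
    omega
  · intro h j hj
    rw [key j (by omega), key i hi]
    exact Nat.add_lt_add_right (h j hj) p

-- decomposition of filter at a position satisfying the predicate
lemma filter_decomp (P : ℕ → Bool) (l : List ℕ) (i : ℕ) (hi : i < l.length)
    (hP : P (l[i]) = true) :
    l.filter P = ((l.take i).filter P) ++ l[i] :: ((l.drop (i + 1)).filter P) := by
  conv_lhs => rw [← List.take_append_drop (i + 1) l]
  rw [List.take_succ, List.getElem?_eq_getElem hi]
  simp only [Option.toList_some]
  rw [List.filter_append, List.filter_append, List.filter_cons, if_pos hP]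
  simp

lemma filter_take_prefix (P : ℕ → Bool) (l : List ℕ) (i : ℕ) :
    (l.filter P).take ((l.take i).filter P).length = (l.take i).filter P := by
  have h : l.filter P = (l.take i).filter P ++ (l.drop i).filter P := by
    rw [← List.filter_append, List.take_append_drop]
  rw [h]
  exact List.take_left

lemma filter_get_at (P : ℕ → Bool) (l : List ℕ) (i : ℕ) (hi : i < l.length)
    (hP : P (l[i]) = true) :
    ((l.take i).filter P).length < (l.filter P).length ∧
      (l.filter P)[((l.take i).filter P).length]! = l[i] := by
  set c := ((l.take i).filter P).length with hc
  have hd := filter_decomp P l i hi hP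
  have hlen : c < (l.filter P).length := by
    rw [hd, List.length_append, List.length_cons]; omega
  refine ⟨hlen, ?_⟩
  rw [get!_eq _ hlen, List.getElem_of_eq hd (by omega)]
  rw [List.getElem_append_right (by omega)]
  simp [hc]

lemma mem_take_filter (P : ℕ → Bool) (l : List ℕ) (i : ℕ) (hi : i ≤ l.length) (y : ℕ) :
    y ∈ (l.take i).filter P ↔ ∃ j, j < i ∧ P (l[j]!) = true ∧ l[j]! = y := by
  rw [List.mem_filter]
  constructor
  · rintro ⟨hmem, hPy⟩
    rcases List.mem_iff_getElem.mp hmem with ⟨j, hj, he⟩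
    have hj' : j < i := by rw [List.length_take] at hj; omega
    have hjl : j < l.length := by omega
    have : (l.take i)[j] = l[j] := List.getElem_take
    refine ⟨j, hj', ?_, ?_⟩
    · rw [get!_eq _ hjl, ← this, he]; exact hPy
    · rw [get!_eq _ hjl, ← this, he]
  · rintro ⟨j, hj, hP, he⟩
    have hjl : j < l.length := by omega
    rw [get!_eq _ hjl] at hP he
    subst he
    constructor
    · apply List.mem_iff_getElem.mpr
      exact ⟨j, by rw [List.length_take]; omega, List.getElem_take⟩
    · exact hP

lemma forall_lt_iff (P : ℕ → Bool) (l : List ℕ) (i : ℕ) (hi : i < l.length) (x : ℕ) :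
    (∀ j < i, P (l[j]!) = true → l[j]! < x) ↔
      ∀ r < ((l.take i).filter P).length, (l.filter P)[r]! < x := by
  set c := ((l.take i).filter P).length with hc
  have hpre := filter_take_prefix P l i
  have key : ∀ r, r < c → (l.filter P)[r]! = ((l.take i).filter P)[r]! := by
    intro r hr
    have h1 : r < ((l.filter P).take c).length := by rw [hpre]; exact hr
    have h2 : r < (l.filter P).length := by
      rw [List.length_take] at h1; omega
    rw [get!_eq _ h2, get!_eq _ (by exact hr)]
    exact ((List.getElem_of_eq hpre.symm hr).trans List.getElem_take).symm
  constructor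
  · intro h r hr
    rw [key r hr]
    have hmem : ((l.take i).filter P)[r]! ∈ (l.take i).filter P := by
      rw [get!_eq _ hr]
      exact List.getElem_mem _
    rcases (mem_take_filter P l i (by omega) _).mp hmem with ⟨j, hj, hP, he⟩
    rw [← he]
    exact h j hj hP
  · intro h j hj hP
    have hmem : l[j]! ∈ (l.take i).filter P :=
      (mem_take_filter P l i (by omega) _).mpr ⟨j, hj, hP, rfl⟩
    rcases List.mem_iff_getElem.mp hmem with ⟨r, hr, he⟩
    have := h r hr
    rw [key r hr, get!_eq _ hr, he] at this
    exact this

lemma take_filter_len_congr (P : ℕ → Bool) (w w' : List ℕ)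
    (hp : ∀ k < w.length, P (w[k]!) = P (w'[k]!)) (i : ℕ) (hi : i ≤ w.length)
    (hl : w.length ≤ w'.length) :
    ((w.take i).filter P).length = ((w'.take i).filter P).length := by
  induction i with
  | zero => simp
  | succ k ih =>
    have hk : k < w.length := by omega
    have hk' : k < w'.length := by omega
    rw [List.take_succ, List.take_succ, List.getElem?_eq_getElem hk,
      List.getElem?_eq_getElem hk']
    simp only [Option.toList_some, List.filter_append, List.length_append]
    rw [ih (by omega)]
    congr 1
    have := hp k hk
    rw [get!_eq _ hk, get!_eq _ hk'] at this
    rw [List.filter_cons, List.filter_cons, this]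
    split <;> simp

lemma take_filter_all (P : ℕ → Bool) (l : List ℕ) (i : ℕ) (hi : i ≤ l.length) :
    ((l.take i).filter P).length = i ↔ ∀ j < i, P (l[j]!) = true := by
  have hlen : (l.take i).length = i := by rw [List.length_take]; omega
  constructor
  · intro h j hj
    have := List.length_filter_eq_length_iff.mp (by rw [h, hlen])
    have hjl : j < l.length := by omega
    have hmem : l[j]! ∈ l.take i := by
      rw [get!_eq _ hjl]
      exact List.mem_iff_getElem.mpr ⟨j, by omega, List.getElem_take⟩
    exact this _ hmem
  · intro h
    have ha : ∀ a ∈ l.take i, P a = true := by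
      intro a hmem
      rcases List.mem_iff_getElem.mp hmem with ⟨j, hj, he⟩
      rw [hlen] at hj
      have hjl : j < l.length := by omega
      have : a = l[j]! := by rw [get!_eq _ hjl, ← he]; exact List.getElem_take
      rw [this]
      exact h j hj
    rw [List.length_filter_eq_length_iff.mpr ha, hlen]

lemma cond_mono (p : ℕ) (w w' : List ℕ) (hl : w.length = w'.length)
    (hpat : ∀ i < w.length, (w[i]! ≤ p ↔ w'[i]! ≤ p))
    (hu : lrMaxPositions (w.filter (fun x => decide (x ≤ p))) =
      lrMaxPositions (w'.filter (fun x => decide (x ≤ p))))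
    (hv : lrMaxPositions (w.filter (fun x => decide (p < x))) =
      lrMaxPositions (w'.filter (fun x => decide (p < x))))
    (i : ℕ) (hi : i < w.length)
    (hc : ∀ j < i, w[j]! < w[i]!) : ∀ j < i, w'[j]! < w'[i]! := by
  set Ps : ℕ → Bool := fun x => decide (x ≤ p) with hPs
  set Pb : ℕ → Bool := fun x => decide (p < x) with hPb
  have hi' : i < w'.length := hl ▸ hi
  have hpat' : ∀ k < w.length, Ps (w[k]!) = Ps (w'[k]!) := by
    intro k hk
    simp only [hPs, decide_eq_decide]
    exact hpat k hk
  have hpatb : ∀ k < w.length, Pb (w[k]!) = Pb (w'[k]!) := by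
    intro k hk
    simp only [hPb, decide_eq_decide]
    have := hpat k hk
    omega
  by_cases hsi : w[i]! ≤ p
  · -- small case
    have hsi' : w'[i]! ≤ p := (hpat i hi).mp hsi
    have hall : ∀ j < i, w[j]! ≤ p := by
      intro j hj
      by_contra hbig
      have := hc j hj
      omega
    have hgi : Ps (w[i]) = true := by
      simp only [hPs, decide_eq_true_eq]; rw [← get!_eq _ hi]; exact hsi
    obtain ⟨hclt, hcget⟩ := filter_get_at Ps w i hi hgi
    have hmem : ((w.take i).filter Ps).length ∈ lrMaxPositions (w.filter Ps) := by
      rw [mem_lrMax]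
      refine ⟨hclt, fun r hr => ?_⟩
      rw [hcget, ← get!_eq _ hi]
      exact (forall_lt_iff Ps w i hi (w[i]!)).mp (fun j hj _ => hc j hj) r hr
    rw [hu] at hmem
    rw [mem_lrMax] at hmem
    obtain ⟨hclt', hmax'⟩ := hmem
    have hceq' : ((w'.take i).filter Ps).length = ((w.take i).filter Ps).length :=
      (take_filter_len_congr Ps w w' hpat' i (by omega) (by omega)).symm
    have hgi' : Ps (w'[i]) = true := by
      simp only [hPs, decide_eq_true_eq]; rw [← get!_eq _ hi']; exact hsi'
    obtain ⟨hclt'2, hcget'⟩ := filter_get_at Ps w' i hi' hgi'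
    intro j hj
    have hjl : j < w.length := by omega
    have hsj' : w'[j]! ≤ p := (hpat j hjl).mp (hall j hj)
    refine (forall_lt_iff Ps w' i hi' (w'[i]!)).mpr (fun r hr => ?_) j hj
      (by simp only [hPs, decide_eq_true_eq]; exact hsj')
    have h3 := hmax' r (by omega)
    rw [hceq'] at hcget'
    rw [hcget', ← get!_eq _ hi'] at h3
    exact h3
  · -- big case
    have hbi : p < w[i]! := by omega
    have hbi' : p < w'[i]! := by
      have := hpat i hi
      omega
    have hgi : Pb (w[i]) = true := by
      simp only [hPb, decide_eq_true_eq]; rw [← get!_eq _ hi]; exact hbi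
    obtain ⟨hdlt, hdget⟩ := filter_get_at Pb w i hi hgi
    have hmem : ((w.take i).filter Pb).length ∈ lrMaxPositions (w.filter Pb) := by
      rw [mem_lrMax]
      refine ⟨hdlt, fun r hr => ?_⟩
      rw [hdget, ← get!_eq _ hi]
      exact (forall_lt_iff Pb w i hi (w[i]!)).mp (fun j hj _ => hc j hj) r hr
    rw [hv] at hmem
    rw [mem_lrMax] at hmem
    obtain ⟨hdlt', hmax'⟩ := hmem
    have hdeq' : ((w'.take i).filter Pb).length = ((w.take i).filter Pb).length :=
      (take_filter_len_congr Pb w w' hpatb i (by omega) (by omega)).symm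
    have hgi' : Pb (w'[i]) = true := by
      simp only [hPb, decide_eq_true_eq]; rw [← get!_eq _ hi']; exact hbi'
    obtain ⟨hdlt'2, hdget'⟩ := filter_get_at Pb w' i hi' hgi'
    intro j hj
    have hjl : j < w.length := by omega
    by_cases hsj' : w'[j]! ≤ p
    · omega
    · refine (forall_lt_iff Pb w' i hi' (w'[i]!)).mpr (fun r hr => ?_) j hj
        (by simp only [hPb, decide_eq_true_eq]; omega)
      have h3 := hmax' r (by omega)
      rw [hdeq'] at hdget'
      rw [hdget', ← get!_eq _ hi'] at h3
      exact h3

lemma lr_shuffle_congr (p : ℕ) (w w' : List ℕ) (hl : w.length = w'.length)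
    (hpat : ∀ i < w.length, (w[i]! ≤ p ↔ w'[i]! ≤ p))
    (hu : lrMaxPositions (w.filter (fun x => decide (x ≤ p))) =
      lrMaxPositions (w'.filter (fun x => decide (x ≤ p))))
    (hv : lrMaxPositions (w.filter (fun x => decide (p < x))) =
      lrMaxPositions (w'.filter (fun x => decide (p < x)))) :
    lrMaxPositions w = lrMaxPositions w' := by
  unfold lrMaxPositions
  rw [← hl]
  apply List.filter_congr
  intro i hi
  rw [List.mem_range] at hi
  simp only [decide_eq_decide]
  constructor
  · exact cond_mono p w w' hl hpat hu hv i hi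
  · exact cond_mono p w' w hl.symm
      (fun k hk => (hpat k (by omega)).symm) hu.symm hv.symm i (by omega)

variable {p q : ℕ}

def gmap (p q : ℕ) (α α' : Equiv.Perm (Fin p)) (β β' : Equiv.Perm (Fin q)) (x : ℕ) : ℕ :=
  if hx : 1 ≤ x ∧ x ≤ p then ((α' (α.symm ⟨x - 1, by omega⟩)) : ℕ) + 1
  else if hx2 : p + 1 ≤ x ∧ x ≤ p + q then
    p + ((β' (β.symm ⟨x - p - 1, by omega⟩)) : ℕ) + 1
  else x

lemma gmap_le (α α' : Equiv.Perm (Fin p)) (β β' : Equiv.Perm (Fin q)) (x : ℕ) :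
    gmap p q α α' β β' x ≤ p ↔ x ≤ p := by
  unfold gmap
  split
  · rename_i hx
    have := (α' (α.symm ⟨x - 1, by omega⟩)).isLt
    omega
  · split
    · rename_i hx hx2
      omega
    · rfl

lemma gmap_word_small (α α' : Equiv.Perm (Fin p)) (β β' : Equiv.Perm (Fin q)) :
    (permWord α).map (gmap p q α α' β β') = permWord α' := by
  unfold permWord
  rw [List.map_ofFn]
  congr 1
  funext i
  simp only [Function.comp_apply, gmap]
  rw [dif_pos ⟨by omega, by have := (α i).isLt; omega⟩]
  congr 2
  have : (⟨(α i : ℕ) + 1 - 1, by omega⟩ : Fin p) = α i := by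
    apply Fin.ext; simp
  rw [this, Equiv.symm_apply_apply]

lemma gmap_word_big (α α' : Equiv.Perm (Fin p)) (β β' : Equiv.Perm (Fin q)) :
    ((permWord β).map (· + p)).map (gmap p q α α' β β') = (permWord β').map (· + p) := by
  unfold permWord
  rw [List.map_ofFn, List.map_ofFn, List.map_ofFn]
  congr 1
  funext i
  simp only [Function.comp_apply, gmap]
  rw [dif_neg (by have := (β i).isLt; omega)]
  rw [dif_pos ⟨by omega, by have := (β i).isLt; omega⟩]
  have : (⟨(β i : ℕ) + 1 + p - p - 1, by have := (β i).isLt; omega⟩ : Fin q) = β i := by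
    apply Fin.ext; simp
  rw [this, Equiv.symm_apply_apply]
  omega

def dperm (α α' : Equiv.Perm (Fin p)) (β β' : Equiv.Perm (Fin q)) :
    Equiv.Perm (Fin (p + q)) :=
  finSumFinEquiv.permCongr (Equiv.sumCongr (α.symm.trans α') (β.symm.trans β'))

lemma dperm_apply (α α' : Equiv.Perm (Fin p)) (β β' : Equiv.Perm (Fin q))
    (x : Fin (p + q)) :
    ((dperm α α' β β' x : ℕ)) + 1 = gmap p q α α' β β' ((x : ℕ) + 1) := by
  unfold dperm gmap
  by_cases hx : (x : ℕ) < p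
  · have hx' : x = finSumFinEquiv (Sum.inl ⟨x, hx⟩) := by
      apply Fin.ext
      simp
    rw [hx', Equiv.permCongr_apply, Equiv.symm_apply_apply]
    rw [dif_pos ⟨by simp only [finSumFinEquiv_apply_left, finSumFinEquiv_apply_right, Fin.coe_castAdd, Fin.coe_natAdd, Fin.val_mk]; omega, by simp only [finSumFinEquiv_apply_left, finSumFinEquiv_apply_right, Fin.coe_castAdd, Fin.coe_natAdd, Fin.val_mk]; omega⟩]
    simp only [Equiv.sumCongr_apply, Sum.map_inl, finSumFinEquiv_apply_left]
    simp only [Fin.coe_castAdd, Equiv.trans_apply]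
    have he : (⟨(x : ℕ) + 1 - 1, by omega⟩ : Fin p) = ⟨(x : ℕ), hx⟩ := Fin.ext (by simp)
    rw [he]
  · have hx2 : (x : ℕ) - p < q := by have := x.isLt; omega
    have hx' : x = finSumFinEquiv (Sum.inr ⟨(x : ℕ) - p, hx2⟩) := by
      apply Fin.ext
      simp
      omega
    rw [hx', Equiv.permCongr_apply, Equiv.symm_apply_apply]
    rw [dif_neg (by simp only [finSumFinEquiv_apply_left, finSumFinEquiv_apply_right, Fin.coe_castAdd, Fin.coe_natAdd, Fin.val_mk]; omega)]
    rw [dif_pos ⟨by simp only [finSumFinEquiv_apply_left, finSumFinEquiv_apply_right, Fin.coe_castAdd, Fin.coe_natAdd, Fin.val_mk]; omega, by simp only [finSumFinEquiv_apply_left, finSumFinEquiv_apply_right, Fin.coe_castAdd, Fin.coe_natAdd, Fin.val_mk]; omega⟩]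
    simp only [Equiv.sumCongr_apply, Sum.map_inr, finSumFinEquiv_apply_right]
    simp only [Fin.coe_natAdd, Equiv.trans_apply]
    have he : (⟨p + ((x : ℕ) - p) + 1 - p - 1, by omega⟩ : Fin q) = ⟨(x : ℕ) - p, hx2⟩ :=
      Fin.ext (by simp only [Fin.val_mk]; omega)
    rw [he]

lemma dperm_word (α α' : Equiv.Perm (Fin p)) (β β' : Equiv.Perm (Fin q))
    (γ : Equiv.Perm (Fin (p + q))) :
    permWord (dperm α α' β β' * γ) = (permWord γ).map (gmap p q α α' β β') := by
  unfold permWord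
  rw [List.map_ofFn]
  congr 1
  funext i
  simp only [Function.comp_apply, Equiv.Perm.mul_apply]
  exact dperm_apply α α' β β' (γ i)

lemma permWord_length {n : ℕ} (σ : Equiv.Perm (Fin n)) : (permWord σ).length = n := by
  simp [permWord]

lemma transfer (α α' : Equiv.Perm (Fin p)) (β β' : Equiv.Perm (Fin q))
    (hα : SC (permWord α) = SC (permWord α')) (hβ : SC (permWord β) = SC (permWord β'))
    (γ : Equiv.Perm (Fin (p + q)))
    (hm : shiftedShuffleMem p (permWord α) (permWord β) (permWord γ)) :
    shiftedShuffleMem p (permWord α') (permWord β') (permWord (dperm α α' β β' * γ)) ∧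
      SC (permWord (dperm α α' β β' * γ)) = SC (permWord γ) := by
  set g := gmap p q α α' β β' with hg
  set w := permWord γ with hw
  have hword : permWord (dperm α α' β β' * γ) = w.map g := dperm_word α α' β β' γ
  have hflt_small : (w.map g).filter (fun x => decide (x ≤ p)) = permWord α' := by
    rw [List.filter_map]
    have : ((fun x => decide (x ≤ p)) ∘ g) = (fun x => decide (x ≤ p)) := by
      funext x
      simp only [Function.comp_apply, decide_eq_decide]
      exact gmap_le α α' β β' x
    rw [this, hm.1]
    exact gmap_word_small α α' β β'
  have hflt_big : (w.map g).filter (fun x => decide (p < x)) = (permWord β').map (· + p) := by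
    rw [List.filter_map]
    have : ((fun x => decide (p < x)) ∘ g) = (fun x => decide (p < x)) := by
      funext x
      simp only [Function.comp_apply, decide_eq_decide]
      have := gmap_le α α' β β' x
      rw [← hg] at this
      omega
    rw [this, hm.2]
    exact gmap_word_big α α' β β'
  have hlr : lrMaxPositions (w.map g) = lrMaxPositions w := by
    apply lr_shuffle_congr p (w.map g) w (by simp)
    · intro i hi
      rw [List.length_map] at hi
      rw [get!_eq _ (by simpa using hi), get!_eq _ hi, List.getElem_map]
      exact gmap_le α α' β β' _
    · rw [hflt_small, hm.1]
      exact lr_eq_of_SC_eq (by rw [permWord_length, permWord_length]) hα.symm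
    · rw [hflt_big, hm.2, lr_map_add, lr_map_add]
      exact lr_eq_of_SC_eq (by rw [permWord_length, permWord_length]) hβ.symm
  refine ⟨⟨by rw [hword]; exact hflt_small, by rw [hword]; exact hflt_big⟩, ?_⟩
  rw [hword]
  unfold SC
  rw [hlr, List.length_map]

lemma dperm_inv_comp (α α' : Equiv.Perm (Fin p)) (β β' : Equiv.Perm (Fin q)) :
    dperm α α' β β' * dperm α' α β' β = 1 := by
  apply Equiv.ext
  intro x
  simp only [Equiv.Perm.mul_apply, dperm, Equiv.permCongr_apply, Equiv.symm_apply_apply,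
    Equiv.Perm.one_apply]
  rcases hs : finSumFinEquiv.symm x with a | b
  · have hx : x = finSumFinEquiv (Sum.inl a) := by
      rw [← hs]; exact (Equiv.apply_symm_apply _ _).symm
    conv_rhs => rw [hx]
    simp
  · have hx : x = finSumFinEquiv (Sum.inr b) := by
      rw [← hs]; exact (Equiv.apply_symm_apply _ _).symm
    conv_rhs => rw [hx]
    simp
/-- The distribution of saillance compositions in a shifted shuffle depends
only on the saillance compositions of the two operands. -/
theorem stmt7 (p q : ℕ) (α α' : Equiv.Perm (Fin p)) (β β' : Equiv.Perm (Fin q))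
    (hα : SC (permWord α) = SC (permWord α')) (hβ : SC (permWord β) = SC (permWord β'))
    (I : List ℕ) :
    (Finset.univ.filter (fun γ : Equiv.Perm (Fin (p + q)) =>
        shiftedShuffleMem p (permWord α) (permWord β) (permWord γ) ∧
          SC (permWord γ) = I)).card =
    (Finset.univ.filter (fun γ : Equiv.Perm (Fin (p + q)) =>
        shiftedShuffleMem p (permWord α') (permWord β') (permWord γ) ∧
          SC (permWord γ) = I)).card := by
  apply Finset.card_bij (fun γ _ => dperm α α' β β' * γ)
  · intro γ hγ
    rw [Finset.mem_filter] at hγ ⊢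
    obtain ⟨-, hm, hsc⟩ := hγ
    obtain ⟨hm', hsc'⟩ := transfer α α' β β' hα hβ γ hm
    exact ⟨Finset.mem_univ _, hm', by rw [hsc', hsc]⟩
  · intro γ₁ _ γ₂ _ h
    exact mul_left_cancel h
  · intro γ' hγ'
    rw [Finset.mem_filter] at hγ'
    obtain ⟨-, hm, hsc⟩ := hγ'
    refine ⟨dperm α' α β' β * γ', ?_, ?_⟩
    · rw [Finset.mem_filter]
      obtain ⟨hm', hsc'⟩ := transfer α' α β' β hα.symm hβ.symm γ' hm
      exact ⟨Finset.mem_univ _, hm', by rw [hsc', hsc]⟩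
    · rw [← mul_assoc, dperm_inv_comp, one_mul]
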